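/- arXiv:2411.02111 — 2 statements merged into one kernel-verified Lean document; each statement's English description precedes it below -/
import Mathlib

section
/- Let G be a finite connected weighted graph and let e_i be a non-bridge edge of G with endpoints p_i, q_i and length L_i. Then for all vertices s, t of G: r_G(s,t) = (L_i/(L_i + R_i))·r_{G−e_i}(s,t) + (R_i/(L_i + R_i))·r_{Ḡ_i}(s,t). -/
open scoped Classical

/-- A finite weighted multigraph (resistive electrical network): finitely many
vertices and edges; each edge `e` has two endpoints `ends e` and a positive
length (resistance) `len e`.  Multiple edges and self-loops are allowed. -/
structure WMG where
  V : Type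
  E : Type
  instV : Fintype V
  instE : Fintype E
  ends : E → V × V
  len : E → ℝ
  len_pos : ∀ e, 0 < len e

attribute [instance] WMG.instV WMG.instE

/-- The Moore–Penrose pseudoinverse of a real square matrix, characterized by
the four Penrose equations (it exists and is unique for real matrices). -/
noncomputable def Matrix.mpinv {n : Type} [Fintype n] (A : Matrix n n ℝ) : Matrix n n ℝ :=
  if h : ∃ B : Matrix n n ℝ,
      A * B * A = A ∧ B * A * B = B ∧ Matrix.transpose (A * B) = A * B ∧ Matrix.transpose (B * A) = B * A
  then h.choose else 0

namespace WMG

/-- Indicator function. -/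
noncomputable def ind {α : Type} (x y : α) : ℝ := if x = y then 1 else 0

/-- The weighted Laplacian: an edge `e` with endpoints `a, b` contributes
`(1/len e) * (δ_{ua} - δ_{ub}) * (δ_{va} - δ_{vb})` to the `(u,v)` entry.  So
the off-diagonal `(u,v)` entry is `-∑ 1/len e` over the edges joining `u` and
`v`, and all row sums are zero. -/
noncomputable def lap (G : WMG) : Matrix G.V G.V ℝ :=
  ∑ e : G.E, (G.len e)⁻¹ •
    Matrix.of (fun u v : G.V =>
      (ind u (G.ends e).1 - ind u (G.ends e).2) *
      (ind v (G.ends e).1 - ind v (G.ends e).2))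

/-- Effective resistance `r(p,q) = L⁺pp - 2·L⁺pq + L⁺qq`. -/
noncomputable def res (G : WMG) (p q : G.V) : ℝ :=
  G.lap.mpinv p p - 2 * G.lap.mpinv p q + G.lap.mpinv q q

/-- Voltage function `j_p(q,s) = L⁺pp - L⁺pq - L⁺ps + L⁺qs`. -/
noncomputable def volt (G : WMG) (p q s : G.V) : ℝ :=
  G.lap.mpinv p p - G.lap.mpinv p q - G.lap.mpinv p s + G.lap.mpinv q s

/-- Two vertices are adjacent if some edge has them as its endpoints. -/
def Adj (G : WMG) (u v : G.V) : Prop :=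
  ∃ e : G.E, G.ends e = (u, v) ∨ G.ends e = (v, u)

/-- `u` and `v` are joined by a walk in `G`. -/
def Reach (G : WMG) (u v : G.V) : Prop := Relation.ReflTransGen G.Adj u v

/-- `G` is connected. -/
def Connected (G : WMG) : Prop := Nonempty G.V ∧ ∀ u v : G.V, G.Reach u v

/-- Quotient graph: identify vertices along (the equivalence generated by) the
relation `r`; all edges are kept. -/
noncomputable def quot (G : WMG) (r : G.V → G.V → Prop) : WMG where
  V := Quot r
  E := G.E
  instV := Fintype.ofFinite _
  instE := G.instE
  ends e := (Quot.mk r (G.ends e).1, Quot.mk r (G.ends e).2)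
  len := G.len
  len_pos := G.len_pos

/-- The canonical map from the vertices of `G` to those of a quotient of `G`. -/
def quotMap (G : WMG) (r : G.V → G.V → Prop) : G.V → (G.quot r).V := Quot.mk r

/-- `G_{pq}`: identify the vertices `p` and `q`. -/
noncomputable def ident2 (G : WMG) (p q : G.V) : WMG :=
  G.quot (fun x y => x = p ∧ y = q)

def ident2Map (G : WMG) (p q : G.V) : G.V → (G.ident2 p q).V :=
  G.quotMap _

/-- `G_{pqs}`: identify the vertices `p`, `q`, `s` into a single vertex. -/
noncomputable def ident3 (G : WMG) (p q s : G.V) : WMG :=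
  G.quot (fun x y => (x = p ∧ y = q) ∨ (x = p ∧ y = s))

/-- `G_{pq,st}`: identify `p` with `q` and, separately, `s` with `t`. -/
noncomputable def ident22 (G : WMG) (p q s t : G.V) : WMG :=
  G.quot (fun x y => (x = p ∧ y = q) ∨ (x = s ∧ y = t))

/-- `G_S`: identify all vertices in the set `S` into a single vertex. -/
noncomputable def identSet (G : WMG) (S : Set G.V) : WMG :=
  G.quot (fun x y => x ∈ S ∧ y ∈ S)

/-- `G − e`: delete the edge `e` (keeping all vertices). -/
noncomputable def delete (G : WMG) (e : G.E) : WMG where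
  V := G.V
  E := {f : G.E // f ≠ e}
  instV := G.instV
  instE := Fintype.ofFinite _
  ends f := G.ends f.1
  len f := G.len f.1
  len_pos f := G.len_pos f.1

/-- `e` is a bridge if `G − e` is disconnected. -/
def IsBridge (G : WMG) (e : G.E) : Prop := ¬ (G.delete e).Connected

/-- `Ḡ_e`: contract the edge `e` (identify its endpoints and delete it). -/
noncomputable def contract (G : WMG) (e : G.E) : WMG :=
  (G.delete e).quot (fun x y => x = (G.ends e).1 ∧ y = (G.ends e).2)

def contractMap (G : WMG) (e : G.E) : G.V → (G.contract e).V := Quot.mk _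

/-- Replace the length of the edge `e` by `L'`. -/
noncomputable def setLen (G : WMG) (e : G.E) (L' : ℝ) (hL' : 0 < L') : WMG where
  V := G.V
  E := G.E
  instV := G.instV
  instE := G.instE
  ends := G.ends
  len f := if f = e then L' else G.len f
  len_pos f := by
    by_cases hf : f = e
    · simpa [hf] using hL'
    · simpa [hf] using G.len_pos f

/-- `T` is (the edge set of) a spanning tree of `G`: using only edges of `T`
any two vertices are joined, and `T` has (number of vertices) − 1 edges. -/
def IsSpanningTree (G : WMG) (T : Finset G.E) : Prop :=
  (∀ u v : G.V, Relation.ReflTransGen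
      (fun x y => ∃ e ∈ T, G.ends e = (x, y) ∨ G.ends e = (y, x)) u v) ∧
  T.card = Fintype.card G.V - 1

/-- `t G`: the number of spanning trees of `G` (equals `1` for a one-vertex
graph; self-loops contribute nothing). -/
noncomputable def t (G : WMG) : ℕ := Nat.card {T : Finset G.E // G.IsSpanningTree T}

/-- `t(G_{pq})`, with the convention `t(G_{pp}) = 0`. -/
noncomputable def t2 (G : WMG) (p q : G.V) : ℕ :=
  if p = q then 0 else (G.ident2 p q).t

/-- Disjoint union of two graphs. -/
noncomputable def disjUnion (G₁ G₂ : WMG) : WMG where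
  V := G₁.V ⊕ G₂.V
  E := G₁.E ⊕ G₂.E
  instV := inferInstance
  instE := inferInstance
  ends := Sum.elim (fun e => (Sum.inl (G₁.ends e).1, Sum.inl (G₁.ends e).2))
                   (fun e => (Sum.inr (G₂.ends e).1, Sum.inr (G₂.ends e).2))
  len := Sum.elim G₁.len G₂.len
  len_pos := by
    rintro (e | e)
    · exact G₁.len_pos e
    · exact G₂.len_pos e

/-- Glue `G₁` and `G₂` along two pairs of vertices (`p₁ ↔ p₂`, `q₁ ↔ q₂`):
the result is the graph `G = G₁ ∪ G₂` with `G₁ ∩ G₂ = {p, q}` (the two pieces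
share exactly these two vertices and no edges). -/
noncomputable def glue2 (G₁ G₂ : WMG) (p₁ q₁ : G₁.V) (p₂ q₂ : G₂.V) : WMG :=
  (G₁.disjUnion G₂).quot (fun x y =>
    (x = Sum.inl p₁ ∧ y = Sum.inr p₂) ∨ (x = Sum.inl q₁ ∧ y = Sum.inr q₂))

/-- Glue `G₁` and `G₂` along three pairs of vertices: the result is the graph
`G = G₁ ∪ G₂` with `G₁ ∩ G₂ = {p, q, s}`. -/
noncomputable def glue3 (G₁ G₂ : WMG) (p₁ q₁ s₁ : G₁.V) (p₂ q₂ s₂ : G₂.V) : WMG :=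
  (G₁.disjUnion G₂).quot (fun x y =>
    (x = Sum.inl p₁ ∧ y = Sum.inr p₂) ∨ (x = Sum.inl q₁ ∧ y = Sum.inr q₂) ∨
    (x = Sum.inl s₁ ∧ y = Sum.inr s₂))

/-- Disjoint union of a finite family of graphs. -/
noncomputable def sigmaGraph {k : ℕ} (G : Fin k → WMG) : WMG where
  V := Σ i, (G i).V
  E := Σ i, (G i).E
  instV := inferInstance
  instE := inferInstance
  ends e := (⟨e.1, ((G e.1).ends e.2).1⟩, ⟨e.1, ((G e.1).ends e.2).2⟩)
  len e := (G e.1).len e.2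
  len_pos e := (G e.1).len_pos e.2

/-- Glue the family `G i` along a common pair of vertices (all the `p i` are
identified together, and all the `q i` are identified together): the result is
`G = ⋃ G_i` with `G_i ∩ G_j = {p, q}` for all `i ≠ j`. -/
noncomputable def glueFam {k : ℕ} (G : Fin k → WMG) (p q : ∀ i, (G i).V) : WMG :=
  (sigmaGraph G).quot (fun x y =>
    (∃ i j, x = ⟨i, p i⟩ ∧ y = ⟨j, p j⟩) ∨ (∃ i j, x = ⟨i, q i⟩ ∧ y = ⟨j, q j⟩))

/-- The cyclic successor on `Fin k`. -/
def finSucc {k : ℕ} (i : Fin k) : Fin k :=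
  ⟨(i.1 + 1) % k, Nat.mod_lt _ (Nat.lt_of_le_of_lt (Nat.zero_le _) i.2)⟩

/-- `CG_k`: replace the `i`-th edge of the cycle `C_k` by the graph `G i`,
identifying `t i` (of `G i`) with `s (i+1)` (of `G (i+1)`), cyclically. -/
noncomputable def cycleGlue {k : ℕ} (G : Fin k → WMG) (s t : ∀ i, (G i).V) : WMG :=
  (sigmaGraph G).quot (fun x y =>
    ∃ i, x = ⟨i, t i⟩ ∧ y = ⟨finSucc i, s (finSucc i)⟩)

/-- Join a new vertex `u` (the vertex `none`) to the vertex `p i` of `H` by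
`a i` parallel unit edges, for each `i`.  The resulting graph `G` has `H = G − u`,
and if `p` is injective with all `a i ≥ 1` then `N_G(u) = {p 1, …, p n}` with
`a i` parallel edges joining `u` to `p i`. -/
noncomputable def cone (H : WMG) {n : ℕ} (p : Fin n → H.V) (a : Fin n → ℕ) : WMG where
  V := Option H.V
  E := H.E ⊕ (Σ i : Fin n, Fin (a i))
  instV := inferInstance
  instE := inferInstance
  ends := Sum.elim (fun e => (some (H.ends e).1, some (H.ends e).2))
                   (fun e => (none, some (p e.1)))
  len := Sum.elim H.len (fun _ => 1)
  len_pos := by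
    rintro (e | e)
    · exact H.len_pos e
    · exact one_pos

/-- The path graph `P_n` on `n` vertices `0, 1, …, n-1`, unit edge lengths. -/
noncomputable def path (n : ℕ) : WMG where
  V := Fin n
  E := Fin (n - 1)
  instV := inferInstance
  instE := inferInstance
  ends i := (⟨i.1, by have := i.2; omega⟩, ⟨i.1 + 1, by have := i.2; omega⟩)
  len _ := 1
  len_pos _ := one_pos

/-- The cycle graph `C_n` on `n` vertices, unit edge lengths. -/
noncomputable def cycle (n : ℕ) : WMG where
  V := Fin n
  E := Fin n
  instV := inferInstance
  instE := inferInstance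
  ends i := (i, finSucc i)
  len _ := 1
  len_pos _ := one_pos

/-- The modified fan graph `F̄an_n`: the path `P_n` together with one new hub
vertex joined to each path vertex by `a` parallel edges. -/
noncomputable def fanGraph (n a : ℕ) : WMG :=
  (path n).cone (fun i : Fin n => i) (fun _ => a)

/-- The modified wheel graph `W̄_n`: the cycle `C_n` together with one new hub
vertex joined to each cycle vertex by `a` parallel edges. -/
noncomputable def wheelGraph (n a : ℕ) : WMG :=
  (cycle n).cone (fun i : Fin n => i) (fun _ => a)

end WMG

/-- The Morgan–Voyce polynomial `B_m(x) = ∑_{k=0}^m C(m+k+1, m−k) x^k`. -/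
noncomputable def morganVoyce (m : ℕ) (x : ℝ) : ℝ :=
  ∑ k ∈ Finset.range (m + 1), (Nat.choose (m + k + 1) (m - k) : ℝ) * x ^ k

/-- The polynomial `W_m(x) = ∑_{k=0}^m ((2m+2)/(m+2+k)) C(m+2+k, m−k) x^k`. -/
noncomputable def wheelPoly (m : ℕ) (x : ℝ) : ℝ :=
  ∑ k ∈ Finset.range (m + 1),
    ((2 * m + 2 : ℝ) / (m + 2 + k : ℝ)) * (Nat.choose (m + 2 + k) (m - k) : ℝ) * x ^ k

/-- The Lucas numbers: `L₀ = 2`, `L₁ = 1`, `L_{m+2} = L_m + L_{m+1}`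
(so `L₂ = 3`). -/
def lucas : ℕ → ℕ
  | 0 => 2
  | 1 => 1
  | n + 2 => lucas n + lucas (n + 1)


open Matrix

def IsPenrose {n : Type} [Fintype n] (A B : Matrix n n ℝ) : Prop :=
  A * B * A = A ∧ B * A * B = B ∧ Matrix.transpose (A * B) = A * B ∧ Matrix.transpose (B * A) = B * A

theorem penrose_unique {n : Type} [Fintype n] {A B C : Matrix n n ℝ}
    (hB : IsPenrose A B) (hC : IsPenrose A C) : B = C := by
  obtain ⟨b1, b2, b3, b4⟩ := hB
  obtain ⟨c1, c2, c3, c4⟩ := hC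
  have e1 : A * B = A * C := by
    calc A * B = Bᵀ * Aᵀ := by rw [← Matrix.transpose_mul, b3]
      _ = Bᵀ * (A * C * A)ᵀ := by rw [c1]
      _ = Bᵀ * (Aᵀ * (Cᵀ * Aᵀ)) := by rw [Matrix.transpose_mul, Matrix.transpose_mul]
      _ = (Bᵀ * Aᵀ) * (Cᵀ * Aᵀ) := by rw [mul_assoc]
      _ = (A * B)ᵀ * (A * C)ᵀ := by rw [Matrix.transpose_mul A B, Matrix.transpose_mul A C]
      _ = (A * B) * (A * C) := by rw [b3, c3]
      _ = A * C := by rw [← mul_assoc (A * B) A C, b1]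
  have e2 : B * A = C * A := by
    calc B * A = Aᵀ * Bᵀ := by rw [← Matrix.transpose_mul, b4]
      _ = (A * (C * A))ᵀ * Bᵀ := by rw [← mul_assoc, c1]
      _ = ((C * A)ᵀ * Aᵀ) * Bᵀ := by rw [Matrix.transpose_mul]
      _ = (C * A)ᵀ * (Aᵀ * Bᵀ) := by rw [mul_assoc]
      _ = (C * A)ᵀ * (B * A)ᵀ := by rw [Matrix.transpose_mul B A]
      _ = (C * A) * (B * A) := by rw [b4, c4]
      _ = C * A := by rw [mul_assoc C A (B * A), ← mul_assoc A B A, b1]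
  calc B = B * A * B := b2.symm
    _ = C * A * B := by rw [e2]
    _ = C * (A * B) := by rw [mul_assoc]
    _ = C * (A * C) := by rw [e1]
    _ = C * A * C := by rw [mul_assoc]
    _ = C := c2

theorem penrose_exists {n : Type} [Fintype n] (A : Matrix n n ℝ) (hA : A.IsSymm) :
    ∃ B, IsPenrose A B := by
  have hH : A.IsHermitian := by
    rwa [Matrix.IsHermitian, Matrix.conjTranspose_eq_transpose_of_trivial]
  set U : Matrix n n ℝ := (hH.eigenvectorUnitary : Matrix n n ℝ) with hU
  set d : n → ℝ := hH.eigenvalues with hd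
  have hspec : A = U * Matrix.diagonal d * star U := by
    have := hH.spectral_theorem
    simpa using this
  have hUU : U * star U = 1 := (Matrix.mem_unitaryGroup_iff).mp hH.eigenvectorUnitary.2
  have hUU' : star U * U = 1 := (Matrix.mem_unitaryGroup_iff').mp hH.eigenvectorUnitary.2
  have hstar : star U = Uᵀ := by
    rw [Matrix.star_eq_conjTranspose, Matrix.conjTranspose_eq_transpose_of_trivial]
  have key : ∀ f g : n → ℝ, (U * Matrix.diagonal f * star U) * (U * Matrix.diagonal g * star U)
      = U * Matrix.diagonal (fun i => f i * g i) * star U := by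
    intro f g
    calc (U * Matrix.diagonal f * star U) * (U * Matrix.diagonal g * star U)
        = U * (Matrix.diagonal f * (star U * U) * Matrix.diagonal g) * star U := by
          simp only [Matrix.mul_assoc]
      _ = U * Matrix.diagonal (fun i => f i * g i) * star U := by
          rw [hUU', Matrix.mul_one, Matrix.diagonal_mul_diagonal]
  have sym : ∀ f : n → ℝ, (U * Matrix.diagonal f * star U)ᵀ = U * Matrix.diagonal f * star U := by
    intro f
    rw [hstar]
    simp [Matrix.transpose_mul, Matrix.mul_assoc]
  refine ⟨U * Matrix.diagonal (fun i => (d i)⁻¹) * star U, ?_, ?_, ?_, ?_⟩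
  · rw [hspec, key, key]
    congr 2
    funext i
    by_cases h : d i = 0 <;> field_simp [h]
  · rw [hspec, key, key]
    congr 2
    funext i
    by_cases h : d i = 0 <;> field_simp [h]
  · rw [hspec, key, sym]
  · rw [hspec, key, sym]

theorem mpinv_isPenrose {n : Type} [Fintype n] {A : Matrix n n ℝ} (hA : A.IsSymm) :
    IsPenrose A A.mpinv := by
  have h : ∃ B : Matrix n n ℝ,
      A * B * A = A ∧ B * A * B = B ∧ Matrix.transpose (A * B) = A * B ∧
        Matrix.transpose (B * A) = B * A := penrose_exists A hA
  rw [Matrix.mpinv, dif_pos h]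
  exact h.choose_spec

theorem penrose_transpose {n : Type} [Fintype n] {A B : Matrix n n ℝ} (hA : A.IsSymm)
    (hB : IsPenrose A B) : IsPenrose A Bᵀ := by
  obtain ⟨b1, b2, b3, b4⟩ := hB
  have hA' : Aᵀ = A := hA
  refine ⟨?_, ?_, ?_, ?_⟩
  · have h := congrArg Matrix.transpose b1
    simp only [Matrix.transpose_mul, hA'] at h
    rw [← Matrix.mul_assoc] at h
    exact h
  · have h := congrArg Matrix.transpose b2
    simp only [Matrix.transpose_mul, hA'] at h
    rw [← Matrix.mul_assoc] at h
    exact h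
  · calc (A * Bᵀ)ᵀ = B * Aᵀ := by rw [Matrix.transpose_mul, Matrix.transpose_transpose]
      _ = B * A := by rw [hA']
      _ = (B * A)ᵀ := b4.symm
      _ = Aᵀ * Bᵀ := by rw [Matrix.transpose_mul]
      _ = A * Bᵀ := by rw [hA']
  · calc (Bᵀ * A)ᵀ = Aᵀ * B := by rw [Matrix.transpose_mul, Matrix.transpose_transpose]
      _ = A * B := by rw [hA']
      _ = (A * B)ᵀ := b3.symm
      _ = Bᵀ * Aᵀ := by rw [Matrix.transpose_mul]
      _ = Bᵀ * A := by rw [hA']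

theorem mpinv_isSymm {n : Type} [Fintype n] {A : Matrix n n ℝ} (hA : A.IsSymm) :
    (A.mpinv)ᵀ = A.mpinv :=
  penrose_unique (penrose_transpose hA (mpinv_isPenrose hA)) (mpinv_isPenrose hA)

namespace WMG
noncomputable def chi (G : WMG) (e : G.E) : G.V → ℝ :=
  fun u => ind u (G.ends e).1 - ind u (G.ends e).2

lemma ind_dot (G : WMG) (p : G.V) (x : G.V → ℝ) :
    (∑ u : G.V, ind u p * x u) = x p := by
  simp [ind, ite_mul, Finset.sum_ite_eq']

lemma chi_dot (G : WMG) (e : G.E) (x : G.V → ℝ) :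
    (G.chi e) ⬝ᵥ x = x (G.ends e).1 - x (G.ends e).2 := by
  simp only [dotProduct, chi, sub_mul, Finset.sum_sub_distrib, ind_dot]

lemma lap_mulVec_apply (G : WMG) (x : G.V → ℝ) (v : G.V) :
    (G.lap.mulVec x) v =
      ∑ e : G.E, (G.len e)⁻¹ * (x (G.ends e).1 - x (G.ends e).2) * G.chi e v := by
  simp only [Matrix.mulVec, dotProduct, lap, Matrix.sum_apply, Matrix.smul_apply,
    Matrix.of_apply, smul_eq_mul, Finset.sum_mul]
  rw [Finset.sum_comm]
  congr 1
  funext e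
  rw [← chi_dot G e x]
  simp only [dotProduct, chi, Finset.mul_sum, Finset.sum_mul]
  congr 1
  funext u
  ring

lemma dot_lap_apply (G : WMG) (x y : G.V → ℝ) :
    x ⬝ᵥ G.lap.mulVec y =
      ∑ e : G.E, (G.len e)⁻¹ * (x (G.ends e).1 - x (G.ends e).2) *
        (y (G.ends e).1 - y (G.ends e).2) := by
  simp only [dotProduct, lap_mulVec_apply, Finset.mul_sum]
  rw [Finset.sum_comm]
  congr 1
  funext e
  rw [← chi_dot G e x]
  simp only [dotProduct, chi, Finset.mul_sum, Finset.sum_mul]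
  congr 1
  funext v
  ring


noncomputable def delta (G : WMG) (s t : G.V) : G.V → ℝ := fun v => ind v s - ind v t

lemma delta_dot (G : WMG) (s t : G.V) (y : G.V → ℝ) :
    (G.delta s t) ⬝ᵥ y = y s - y t := by
  simp only [dotProduct, delta, sub_mul, Finset.sum_sub_distrib, ind_dot]

lemma sum_delta (G : WMG) (s t : G.V) : ∑ v : G.V, G.delta s t v = 0 := by
  have h : ∀ p : G.V, ∑ v : G.V, ind v p = 1 := by
    intro p; simp [ind, Finset.sum_ite_eq']
  simp [delta, Finset.sum_sub_distrib, h]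

lemma lap_isSymm (G : WMG) : G.lap.IsSymm := by
  unfold Matrix.IsSymm lap
  rw [Matrix.transpose_sum]
  congr 1
  funext e
  rw [Matrix.transpose_smul]
  congr 1
  ext u v
  simp [mul_comm]

lemma eq_of_adj_of_edge_diffs {G : WMG} {x : G.V → ℝ}
    (hx : ∀ e : G.E, x (G.ends e).1 - x (G.ends e).2 = 0) {u v : G.V} (h : G.Adj u v) :
    x u = x v := by
  obtain ⟨e, he | he⟩ := h
  · have := hx e; rw [he] at this; linarith [this]
  · have := hx e; rw [he] at this; linarith [this]

lemma const_of_reach {G : WMG} {x : G.V → ℝ}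
    (hx : ∀ u v : G.V, G.Adj u v → x u = x v) {u v : G.V} (h : G.Reach u v) :
    x u = x v := by
  induction h with
  | refl => rfl
  | tail _ h2 ih => exact ih.trans (hx _ _ h2)

lemma edge_diffs_of_lap_eq_zero {G : WMG} {x : G.V → ℝ}
    (hx : G.lap.mulVec x = 0) (e : G.E) : x (G.ends e).1 - x (G.ends e).2 = 0 := by
  have h0 : x ⬝ᵥ G.lap.mulVec x = 0 := by rw [hx]; simp
  rw [dot_lap_apply] at h0
  have h1 : ∀ e ∈ (Finset.univ : Finset G.E),
      0 ≤ (G.len e)⁻¹ * (x (G.ends e).1 - x (G.ends e).2) *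
        (x (G.ends e).1 - x (G.ends e).2) := by
    intro e _
    rw [mul_assoc]
    exact mul_nonneg (inv_nonneg.2 (G.len_pos e).le) (mul_self_nonneg _)
  have h2 := (Finset.sum_eq_zero_iff_of_nonneg h1).1 h0 e (Finset.mem_univ e)
  have hc : (G.len e)⁻¹ ≠ 0 := inv_ne_zero (G.len_pos e).ne'
  rcases mul_eq_zero.1 h2 with h3 | h3
  · rcases mul_eq_zero.1 h3 with h4 | h4
    · exact absurd h4 hc
    · exact h4
  · exact h3

lemma const_of_lap_eq_zero {G : WMG} (hG : G.Connected) {x : G.V → ℝ}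
    (hx : G.lap.mulVec x = 0) (u v : G.V) : x u = x v :=
  const_of_reach (fun _ _ h => eq_of_adj_of_edge_diffs
    (edge_diffs_of_lap_eq_zero hx) h) (hG.2 u v)

lemma lap_mulVec_const (G : WMG) : G.lap.mulVec (fun _ => (1:ℝ)) = 0 := by
  funext v
  rw [lap_mulVec_apply]
  simp

lemma sum_lap_mulVec (G : WMG) (x : G.V → ℝ) : ∑ v : G.V, G.lap.mulVec x v = 0 := by
  simp only [lap_mulVec_apply]
  rw [Finset.sum_comm]
  apply Finset.sum_eq_zero
  intro e _
  rw [← Finset.mul_sum]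
  have : ∑ v : G.V, G.chi e v = 0 := by
    have h : ∀ p : G.V, ∑ v : G.V, ind v p = 1 := by
      intro p; simp [ind, Finset.sum_ite_eq']
    simp [chi, Finset.sum_sub_distrib, h]
  rw [this, mul_zero]

noncomputable def sumFun (G : WMG) : (G.V → ℝ) →ₗ[ℝ] ℝ where
  toFun x := ∑ v, x v
  map_add' x y := by simp [Finset.sum_add_distrib]
  map_smul' c x := by simp [Finset.mul_sum]

lemma exists_potential {G : WMG} (hG : G.Connected) {b : G.V → ℝ}
    (hb : ∑ v, b v = 0) : ∃ f : G.V → ℝ, G.lap.mulVec f = b := by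
  obtain ⟨v₀⟩ := hG.1
  set T := G.lap.mulVecLin with hT
  have hker : LinearMap.ker T = Submodule.span ℝ {fun _ => (1:ℝ)} := by
    apply le_antisymm
    · intro x hx
      rw [LinearMap.mem_ker, hT, Matrix.mulVecLin_apply] at hx
      rw [Submodule.mem_span_singleton]
      refine ⟨x v₀, funext fun v => ?_⟩
      have := const_of_lap_eq_zero hG hx v v₀
      simp [this]
    · rw [Submodule.span_le, Set.singleton_subset_iff]
      rw [SetLike.mem_coe, LinearMap.mem_ker, hT, Matrix.mulVecLin_apply]
      exact G.lap_mulVec_const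
  have hone : (fun _ : G.V => (1:ℝ)) ≠ 0 := by
    intro h
    have := congrFun h v₀
    simp at this
  have h1 : Module.finrank ℝ (LinearMap.ker T) = 1 := by
    rw [hker]
    exact finrank_span_singleton hone
  have hrange : LinearMap.range T ≤ LinearMap.ker G.sumFun := by
    rintro y ⟨x, rfl⟩
    rw [LinearMap.mem_ker]
    exact G.sum_lap_mulVec x
  have hSsurj : Function.Surjective G.sumFun := by
    intro r
    refine ⟨fun v => if v = v₀ then r else 0, ?_⟩
    show ∑ v, (if v = v₀ then r else (0:ℝ)) = r
    simp [Finset.sum_ite_eq']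
  have h2 := LinearMap.finrank_range_add_finrank_ker T
  have h3 := LinearMap.finrank_range_add_finrank_ker G.sumFun
  have h4 : Module.finrank ℝ (LinearMap.range G.sumFun) = 1 := by
    rw [LinearMap.range_eq_top.2 hSsurj]
    simp
  have heq : LinearMap.range T = LinearMap.ker G.sumFun := by
    apply Submodule.eq_of_le_of_finrank_eq hrange
    omega
  have hbmem : b ∈ LinearMap.ker G.sumFun := by
    rw [LinearMap.mem_ker]
    exact hb
  rw [← heq] at hbmem
  obtain ⟨f, hf⟩ := hbmem
  exact ⟨f, by rw [← Matrix.mulVecLin_apply, ← hT, hf]⟩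


theorem res_eq_potential (G : WMG) (hG : G.Connected) {s t : G.V} {f : G.V → ℝ}
    (hf : G.lap.mulVec f = G.delta s t) : G.res s t = f s - f t := by
  have hA : G.lap.IsSymm := G.lap_isSymm
  set A := G.lap with hAdef
  set B := A.mpinv with hB
  obtain ⟨p1, p2, p3, p4⟩ := mpinv_isPenrose hA
  have hBsymm : Bᵀ = B := mpinv_isSymm hA
  set g := (B * A).mulVec f with hg
  have h1 : A.mulVec g = A.mulVec f := by
    rw [hg, Matrix.mulVec_mulVec, ← Matrix.mul_assoc, p1]
  have h0 : A.mulVec (f - g) = 0 := by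
    rw [Matrix.mulVec_sub, h1, sub_self]
  have hconst : (f - g) s = (f - g) t := const_of_lap_eq_zero hG h0 s t
  have hgv : ∀ v, g v = B v s - B v t := by
    intro v
    rw [hg, ← Matrix.mulVec_mulVec, hf]
    simp only [Matrix.mulVec, dotProduct, delta, mul_sub, Finset.sum_sub_distrib, ind,
      mul_ite, mul_one, mul_zero, Finset.sum_ite_eq', Finset.mem_univ, if_true]
  have hts : B t s = B s t := by
    have := congrFun (congrFun hBsymm s) t
    simpa [Matrix.transpose_apply] using this
  have hres : G.res s t = g s - g t := by
    show B s s - 2 * B s t + B t t = g s - g t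
    rw [hgv s, hgv t, hts]
    ring
  have hc : f s - g s = f t - g t := hconst
  rw [hres]
  linarith

theorem res_pos (G : WMG) (hG : G.Connected) {p q : G.V} (hpq : p ≠ q) : 0 < G.res p q := by
  obtain ⟨g, hgeq⟩ := exists_potential hG (G.sum_delta p q)
  rw [res_eq_potential G hG hgeq]
  have hq : g p - g q = g ⬝ᵥ G.lap.mulVec g := by
    rw [hgeq, dotProduct_comm, delta_dot]
  rw [hq, dot_lap_apply]
  have hnn : ∀ e ∈ (Finset.univ : Finset G.E),
      0 ≤ (G.len e)⁻¹ * (g (G.ends e).1 - g (G.ends e).2) * (g (G.ends e).1 - g (G.ends e).2) := by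
    intro e _
    rw [mul_assoc]
    exact mul_nonneg (inv_nonneg.2 (G.len_pos e).le) (mul_self_nonneg _)
  rcases (Finset.sum_nonneg hnn).lt_or_eq with h | h
  · exact h
  · exfalso
    have hdiff : ∀ e : G.E, g (G.ends e).1 - g (G.ends e).2 = 0 := by
      intro e
      have h2 := (Finset.sum_eq_zero_iff_of_nonneg hnn).1 h.symm e (Finset.mem_univ e)
      have hc : (G.len e)⁻¹ ≠ 0 := inv_ne_zero (G.len_pos e).ne'
      rcases mul_eq_zero.1 h2 with h3 | h3
      · rcases mul_eq_zero.1 h3 with h4 | h4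
        · exact absurd h4 hc
        · exact h4
      · exact h3
    have hzero : G.lap.mulVec g = 0 := by
      funext v
      rw [lap_mulVec_apply]
      apply Finset.sum_eq_zero
      intro e _
      rw [hdiff e]
      ring
    rw [hgeq] at hzero
    have := congrFun hzero p
    simp [delta, ind, hpq] at this

lemma res_self (G : WMG) (p : G.V) : G.res p p = 0 := by
  simp only [res]
  ring


lemma lap_delete_mulVec (G : WMG) (e : G.E) (x : G.V → ℝ) (v : G.V) :
    G.lap.mulVec x v = (G.delete e).lap.mulVec x v
      + (G.len e)⁻¹ * (x (G.ends e).1 - x (G.ends e).2) * G.chi e v := by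
  rw [lap_mulVec_apply G, lap_mulVec_apply (G.delete e) x v]
  rw [← Finset.sum_erase_add _ _ (Finset.mem_univ e)]
  congr 1
  exact Finset.sum_subtype _ (by simp) _

lemma quot_connected {G : WMG} (hG : G.Connected) (r : G.V → G.V → Prop) :
    (G.quot r).Connected := by
  constructor
  · obtain ⟨v⟩ := hG.1
    exact ⟨Quot.mk r v⟩
  · intro x y
    obtain ⟨u, rfl⟩ := Quot.exists_rep x
    obtain ⟨v, rfl⟩ := Quot.exists_rep y
    have hmap : ∀ a b : G.V, G.Adj a b →
        (G.quot r).Adj (Quot.mk r a) (Quot.mk r b) := by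
      rintro a b ⟨e, h | h⟩
      · exact ⟨e, Or.inl (by show (Quot.mk r (G.ends e).1, Quot.mk r (G.ends e).2) = _; rw [h]; rfl)⟩
      · exact ⟨e, Or.inr (by show (Quot.mk r (G.ends e).1, Quot.mk r (G.ends e).2) = _; rw [h]; rfl)⟩
    exact Relation.ReflTransGen.lift (Quot.mk r) (fun a b h => hmap a b h) u v (hG.2 u v)

lemma quot_lap_mulVec (G : WMG) (r : G.V → G.V → Prop) (u : (G.quot r).V → ℝ)
    (x : (G.quot r).V) :
    (G.quot r).lap.mulVec u x =
      ∑ v : G.V, (if Quot.mk r v = x then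
        G.lap.mulVec (fun w => u (Quot.mk r w)) v else 0) := by
  have hg : ∀ p : G.V, (∑ v : G.V, ind v p * (if Quot.mk r v = x then (1:ℝ) else 0))
      = ind x (Quot.mk r p) := by
    intro p
    rw [ind_dot]
    simp [ind, eq_comm]
    exact if_congr eq_comm rfl rfl
  rw [lap_mulVec_apply]
  have hswap : ∑ v : G.V, (if Quot.mk r v = x then
      G.lap.mulVec (fun w => u (Quot.mk r w)) v else 0)
      = ∑ e : G.E, ∑ v : G.V, (if Quot.mk r v = x then
        (G.len e)⁻¹ * (u (Quot.mk r (G.ends e).1) - u (Quot.mk r (G.ends e).2)) *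
          G.chi e v else 0) := by
    rw [Finset.sum_comm]
    congr 1
    funext v
    by_cases h : Quot.mk r v = x <;> simp [h, lap_mulVec_apply]
  rw [hswap]
  congr 1
  funext e
  have hpt : ∀ v : G.V, (if Quot.mk r v = x then
      (G.len e)⁻¹ * (u (Quot.mk r (G.ends e).1) - u (Quot.mk r (G.ends e).2)) *
        G.chi e v else 0)
      = (G.len e)⁻¹ * (u (Quot.mk r (G.ends e).1) - u (Quot.mk r (G.ends e).2)) *
        ((ind v (G.ends e).1 - ind v (G.ends e).2) * (if Quot.mk r v = x then 1 else 0)) := by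
    intro v
    by_cases h : Quot.mk r v = x <;> simp [h, chi]
  simp only [hpt]
  rw [← Finset.mul_sum]
  have h2 : ∑ v : G.V, (ind v (G.ends e).1 - ind v (G.ends e).2) *
      (if Quot.mk r v = x then (1:ℝ) else 0)
      = ind x (Quot.mk r (G.ends e).1) - ind x (Quot.mk r (G.ends e).2) := by
    simp only [sub_mul, Finset.sum_sub_distrib, hg]
  rw [h2]
  rfl

lemma sum_ite_ind {G : WMG} {X : Type} (π : G.V → X) (x : X) (a : G.V) :
    ∑ v : G.V, (if π v = x then ind v a else 0) = ind x (π a) := by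
  have h : ∀ v, (if π v = x then ind v a else 0)
      = ind v a * (if π v = x then (1:ℝ) else 0) := by
    intro v
    by_cases h : π v = x <;> simp [h]
  simp only [h]
  rw [ind_dot]
  simp [ind, eq_comm]

end WMG

open WMG

/-- If the edge `e` (with endpoints `p_i, q_i` and length `L_i`) is not a
bridge of the finite connected weighted graph `G`, then for all vertices
`s, t`:
`r(s,t) = (L_i/(L_i+R_i)) r_{G-e}(s,t) + (R_i/(L_i+R_i)) r_{Ḡ_e}(s,t)`. -/
theorem res_convex_combination_of_delete_and_contract (G : WMG) (hG : G.Connected)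
    (e : G.E) (he : ¬ G.IsBridge e) (s t : G.V) :
    G.res s t =
      (G.len e / (G.len e + (G.delete e).res (G.ends e).1 (G.ends e).2)) *
        (G.delete e).res s t +
      ((G.delete e).res (G.ends e).1 (G.ends e).2 /
        (G.len e + (G.delete e).res (G.ends e).1 (G.ends e).2)) *
        (G.contract e).res (G.contractMap e s) (G.contractMap e t) := by
  have hG' : (G.delete e).Connected := not_not.mp he
  set p := (G.ends e).1 with hp
  set q := (G.ends e).2 with hq
  set L := G.len e with hL
  have hLpos : 0 < L := G.len_pos e
  by_cases hpq : p = q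
  · -- self-loop case
    have hchi : G.chi e = 0 := by
      funext v
      simp [chi, ← hp, ← hq, hpq]
    have hlap : G.lap = (G.delete e).lap := by
      have hmv : ∀ x : G.V → ℝ, G.lap.mulVec x = (G.delete e).lap.mulVec x := by
        intro x
        funext v
        rw [lap_delete_mulVec G e x v]
        simp [hchi]
      ext i j
      have h := congrFun (hmv (Pi.single j 1)) i
      change _ = ((G.delete e).lap *ᵥ (Pi.single (j : (G.delete e).V) (1:ℝ))) i at h
      rw [Matrix.mulVec_single_one] at h
      exact h.trans (congrFun (Matrix.mulVec_single_one (G.delete e).lap j) i)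
    have hres : G.res s t = (G.delete e).res s t := by
      unfold res
      rw [hlap]
      rfl
    have hR : (G.delete e).res p q = 0 := by
      rw [hpq]
      exact res_self (G.delete e) q
    rw [hres, hR]
    simp [hLpos.ne']
  · -- main case
    have hRpos : 0 < (G.delete e).res p q := res_pos _ hG' hpq
    set R := (G.delete e).res p q with hRdef
    have hLR : L + R ≠ 0 := by positivity
    obtain ⟨f, hf⟩ := exists_potential hG' ((G.delete e).sum_delta s t)
    obtain ⟨g, hg⟩ := exists_potential hG' ((G.delete e).sum_delta p q)
    have hfst : (G.delete e).res s t = f s - f t := res_eq_potential _ hG' hf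
    have hgpq : R = g p - g q := by
      rw [hRdef]
      exact res_eq_potential _ hG' hg
    set D := f p - f q with hD
    -- the G side
    set α := -D / (L + R) with hα
    have hhG : G.lap.mulVec (fun v => f v + α * g v) = G.delta s t := by
      funext v
      rw [lap_delete_mulVec G e]
      have h1 : (G.delete e).lap.mulVec (fun v : G.V => f v + α * g v) v
          = (G.delete e).delta s t v + α * (G.delete e).delta p q v := by
        have h2 : (fun v : G.V => f v + α * g v) = f + α • g := rfl
        rw [h2, Matrix.mulVec_add, Matrix.mulVec_smul, hf, hg]
        rfl
      rw [h1]
      have hfg : f (G.ends e).1 + α * g (G.ends e).1 - (f (G.ends e).2 + α * g (G.ends e).2)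
          = D + α * R := by
        simp only [← hp, ← hq]
        rw [hD, hgpq]
        ring
      rw [hfg, ← hL]
      have hchiv : G.chi e v = (G.delete e).delta p q v := rfl
      rw [hchiv]
      have hcoef : α + L⁻¹ * (D + α * R) = 0 := by
        rw [hα]
        field_simp
        ring
      have hds : G.delta s t v = (G.delete e).delta s t v := rfl
      rw [hds]
      linear_combination (G.delete e).delta p q v * hcoef
    have hGres : G.res s t = (f s + α * g s) - (f t + α * g t) :=
      res_eq_potential G hG hhG
    -- the contracted side
    set β := -D / R with hβ
    set w : G.V → ℝ := fun v => f v + β * g v with hw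
    have hβR : β * R = -D := by
      rw [hβ]
      field_simp
    have hwpq : w p = w q := by
      have h1 : w p - w q = D + β * R := by
        rw [hw]
        simp only
        rw [hD, hgpq]
        ring
      rw [hβR] at h1
      linarith [h1]
    set u : (G.contract e).V → ℝ :=
      Quot.lift w (by rintro a b ⟨ha, hb⟩; rw [ha, hb]; exact hwpq) with hu
    have hCconn : (G.contract e).Connected := quot_connected hG' _
    have hlw : (G.delete e).lap.mulVec w
        = fun v => (G.delete e).delta s t v + β * (G.delete e).delta p q v := by
      have h2 : w = f + β • g := rfl
      rw [h2, Matrix.mulVec_add, Matrix.mulVec_smul, hf, hg]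
      funext v
      simp
    have hCeq : (G.contract e).lap.mulVec u
        = (G.contract e).delta (G.contractMap e s) (G.contractMap e t) := by
      funext x
      calc (G.contract e).lap.mulVec u x
          = ∑ v : G.V, (if G.contractMap e v = x then (G.delete e).lap.mulVec w v else 0) :=
            quot_lap_mulVec (G.delete e) _ u x
        _ = ∑ v : G.V, (if G.contractMap e v = x then
              ((G.delete e).delta s t v + β * (G.delete e).delta p q v) else 0) := by
            simp only [hlw]
        _ = (ind x (G.contractMap e s) - ind x (G.contractMap e t))
              + β * (ind x (G.contractMap e p) - ind x (G.contractMap e q)) := by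
            have split : ∀ v : G.V, (if G.contractMap e v = x then
                ((G.delete e).delta s t v + β * (G.delete e).delta p q v) else 0)
                = ((if G.contractMap e v = x then ind v s else 0)
                  - (if G.contractMap e v = x then ind v t else 0))
                  + β * ((if G.contractMap e v = x then ind v p else 0)
                  - (if G.contractMap e v = x then ind v q else 0)) := by
              intro v
              by_cases h : G.contractMap e v = x <;> simp [h, delta] <;> rfl
            simp only [split, Finset.sum_add_distrib, Finset.sum_sub_distrib, ← Finset.mul_sum]
            rw [sum_ite_ind, sum_ite_ind, sum_ite_ind, sum_ite_ind]
        _ = (G.contract e).delta (G.contractMap e s) (G.contractMap e t) x := by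
            have hpq2 : G.contractMap e p = G.contractMap e q := Quot.sound ⟨rfl, rfl⟩
            rw [hpq2]
            simp [delta]
    have hCres : (G.contract e).res (G.contractMap e s) (G.contractMap e t)
        = w s - w t := res_eq_potential _ hCconn hCeq
    rw [hGres, hfst, hCres]
    show f s + α * g s - (f t + α * g t)
        = L / (L + R) * (f s - f t) + R / (L + R) * ((f s + β * g s) - (f t + β * g t))
    rw [hα, hβ]
    field_simp
    ring
end

section
/- (Euler's Formula for the Resistance Function I) Let G be a finite connected weighted graph, let s, t be vertices of G, and let B be the set of edges e_i of G such that s and t lie in different connected components of G−e_i (necessarily bridges). Then r(s,t) = Σ_{e_i ∈ B} L_i + Σ_{e_i not a bridge} (L_i/(L_i+R_i)²)·( j_{p_i}^{G−e_i}(q_i,s) − j_{p_i}^{G−e_i}(q_i,t) )² = Σ_{e_i ∈ B} L_i + Σ_{e_i not a bridge} (1/L_i)·( j_{p_i}(q_i,s) − j_{p_i}(q_i,t) )². -/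
open scoped Classical

open scoped Matrix

namespace WMG

/-- The averaging matrix `J`. -/
noncomputable def Jmat (G : WMG) : Matrix G.V G.V ℝ :=
  (Fintype.card G.V : ℝ)⁻¹ • Matrix.of (fun _ _ => 1)

lemma sum_ind {α : Type} [Fintype α] (p : α) : ∑ u, ind u p = 1 := by
  simp [ind, Finset.sum_ite_eq']

lemma sum_ind_mul {α : Type} [Fintype α] (x : α → ℝ) (p : α) :
    ∑ u, ind u p * x u = x p := by
  simp [ind, ite_mul, Finset.sum_ite_eq']

lemma sum_sub_ind_mul {α : Type} [Fintype α] (x : α → ℝ) (p q : α) :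
    ∑ u, (ind u p - ind u q) * x u = x p - x q := by
  simp [sub_mul, Finset.sum_sub_distrib, sum_ind_mul]

lemma lap_apply (G : WMG) (u v : G.V) :
    G.lap u v = ∑ e : G.E, (G.len e)⁻¹ *
      ((ind u (G.ends e).1 - ind u (G.ends e).2) *
       (ind v (G.ends e).1 - ind v (G.ends e).2)) := by
  simp [lap, Matrix.sum_apply]

lemma lap_transpose (G : WMG) : (G.lap)ᵀ = G.lap := by
  ext u v
  rw [Matrix.transpose_apply, lap_apply, lap_apply]
  exact Finset.sum_congr rfl fun e _ => by ring

lemma lap_mulVec (G : WMG) (x : G.V → ℝ) (v : G.V) :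
    (G.lap *ᵥ x) v = ∑ e : G.E, (G.len e)⁻¹ *
      ((ind v (G.ends e).1 - ind v (G.ends e).2) *
       (x (G.ends e).1 - x (G.ends e).2)) := by
  rw [Matrix.mulVec, dotProduct]
  simp_rw [lap_apply, Finset.sum_mul]
  rw [Finset.sum_comm]
  refine Finset.sum_congr rfl fun e _ => ?_
  calc ∑ u : G.V, (G.len e)⁻¹ *
      ((ind v (G.ends e).1 - ind v (G.ends e).2) *
       (ind u (G.ends e).1 - ind u (G.ends e).2)) * x u
      = ∑ u : G.V, ((G.len e)⁻¹ * (ind v (G.ends e).1 - ind v (G.ends e).2)) *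
        ((ind u (G.ends e).1 - ind u (G.ends e).2) * x u) :=
        Finset.sum_congr rfl fun u _ => by ring
    _ = ((G.len e)⁻¹ * (ind v (G.ends e).1 - ind v (G.ends e).2)) *
        ∑ u : G.V, (ind u (G.ends e).1 - ind u (G.ends e).2) * x u := by
        rw [Finset.mul_sum]
    _ = _ := by rw [sum_sub_ind_mul]; ring

lemma sum_lap_mulVec_s7 (G : WMG) (x : G.V → ℝ) (C : Finset G.V) :
    ∑ v ∈ C, (G.lap *ᵥ x) v = ∑ e : G.E, (G.len e)⁻¹ *
      (((if (G.ends e).1 ∈ C then (1:ℝ) else 0) - (if (G.ends e).2 ∈ C then (1:ℝ) else 0)) *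
       (x (G.ends e).1 - x (G.ends e).2)) := by
  simp_rw [lap_mulVec]
  rw [Finset.sum_comm]
  refine Finset.sum_congr rfl fun e _ => ?_
  have h1 : ∀ p : G.V, ∑ v ∈ C, ind v p = (if p ∈ C then (1:ℝ) else 0) := by
    intro p; simp [ind, Finset.sum_ite_eq']
  calc ∑ v ∈ C, (G.len e)⁻¹ *
      ((ind v (G.ends e).1 - ind v (G.ends e).2) * (x (G.ends e).1 - x (G.ends e).2))
      = (∑ v ∈ C, ((G.len e)⁻¹ * (x (G.ends e).1 - x (G.ends e).2)) * ind v (G.ends e).1)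
        - ∑ v ∈ C, ((G.len e)⁻¹ * (x (G.ends e).1 - x (G.ends e).2)) * ind v (G.ends e).2 := by
        rw [← Finset.sum_sub_distrib]; exact Finset.sum_congr rfl fun v _ => by ring
    _ = _ := by rw [← Finset.mul_sum, ← Finset.mul_sum, h1, h1]; ring

lemma dot_lap_mulVec (G : WMG) (y x : G.V → ℝ) :
    y ⬝ᵥ (G.lap *ᵥ x) = ∑ e : G.E, (G.len e)⁻¹ *
      ((y (G.ends e).1 - y (G.ends e).2) * (x (G.ends e).1 - x (G.ends e).2)) := by
  rw [dotProduct]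
  simp_rw [lap_mulVec, Finset.mul_sum]
  rw [Finset.sum_comm]
  refine Finset.sum_congr rfl fun e _ => ?_
  calc ∑ v : G.V, y v * ((G.len e)⁻¹ *
      ((ind v (G.ends e).1 - ind v (G.ends e).2) * (x (G.ends e).1 - x (G.ends e).2)))
      = ∑ v : G.V, ((G.len e)⁻¹ * (x (G.ends e).1 - x (G.ends e).2)) *
        ((ind v (G.ends e).1 - ind v (G.ends e).2) * y v) :=
        Finset.sum_congr rfl fun v _ => by ring
    _ = ((G.len e)⁻¹ * (x (G.ends e).1 - x (G.ends e).2)) *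
        ∑ v : G.V, (ind v (G.ends e).1 - ind v (G.ends e).2) * y v := by rw [Finset.mul_sum]
    _ = _ := by rw [sum_sub_ind_mul]; ring

end WMG
namespace WMG

lemma lap_row_sum (G : WMG) (u : G.V) : ∑ w, G.lap u w = 0 := by
  simp_rw [lap_apply]
  rw [Finset.sum_comm]
  refine Finset.sum_eq_zero fun e _ => ?_
  have : ∑ w : G.V, (G.len e)⁻¹ *
      ((ind u (G.ends e).1 - ind u (G.ends e).2) *
       (ind w (G.ends e).1 - ind w (G.ends e).2))
      = ((G.len e)⁻¹ * (ind u (G.ends e).1 - ind u (G.ends e).2)) *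
        ((∑ w : G.V, ind w (G.ends e).1) - ∑ w : G.V, ind w (G.ends e).2) := by
    rw [← Finset.sum_sub_distrib, Finset.mul_sum]
    exact Finset.sum_congr rfl fun w _ => by ring
  rw [this, sum_ind, sum_ind]
  ring

lemma Jmat_transpose (G : WMG) : (G.Jmat)ᵀ = G.Jmat := by
  ext u v; simp [Jmat]

lemma card_pos (G : WMG) (hG : G.Connected) : 0 < (Fintype.card G.V : ℝ) := by
  have : Nonempty G.V := hG.1
  exact_mod_cast Fintype.card_pos

lemma Jmat_mul_Jmat (G : WMG) (hG : G.Connected) : G.Jmat * G.Jmat = G.Jmat := by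
  have hn := G.card_pos hG
  ext u v
  simp [Jmat, Matrix.mul_apply, Finset.sum_const, Finset.card_univ]
  field_simp

lemma lap_mul_Jmat (G : WMG) : G.lap * G.Jmat = 0 := by
  ext u v
  simp only [Matrix.mul_apply, Jmat, Matrix.smul_apply, Matrix.of_apply, smul_eq_mul, mul_one,
    Matrix.zero_apply]
  rw [← Finset.sum_mul, lap_row_sum, zero_mul]

lemma Jmat_mul_lap (G : WMG) : G.Jmat * G.lap = 0 := by
  have := congrArg Matrix.transpose (G.lap_mul_Jmat)
  rwa [Matrix.transpose_mul, Jmat_transpose, lap_transpose, Matrix.transpose_zero] at this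

lemma Jmat_mulVec (G : WMG) (x : G.V → ℝ) (v : G.V) :
    (G.Jmat *ᵥ x) v = (Fintype.card G.V : ℝ)⁻¹ * ∑ u, x u := by
  simp [Jmat, Matrix.mulVec, dotProduct, Finset.mul_sum]

/-- Uniqueness of the Moore–Penrose inverse. -/
lemma penrose_unique {n : Type} [Fintype n] (A B₁ B₂ : Matrix n n ℝ)
    (h₁₁ : A * B₁ * A = A) (h₁₂ : B₁ * A * B₁ = B₁)
    (h₁₃ : (A * B₁)ᵀ = A * B₁) (h₁₄ : (B₁ * A)ᵀ = B₁ * A)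
    (h₂₁ : A * B₂ * A = A) (h₂₂ : B₂ * A * B₂ = B₂)
    (h₂₃ : (A * B₂)ᵀ = A * B₂) (h₂₄ : (B₂ * A)ᵀ = B₂ * A) : B₁ = B₂ := by
  have hAB : A * B₁ = A * B₂ := by
    have t1 : A * B₁ = (A * B₂) * (A * B₁) := by
      conv_lhs => rw [← h₂₁]
      simp only [Matrix.mul_assoc]
    have t3 : (A * B₁) * (A * B₂) = A * B₂ := by
      calc (A * B₁) * (A * B₂) = (A * B₁ * A) * B₂ := by simp only [Matrix.mul_assoc]
        _ = A * B₂ := by rw [h₁₁]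
    have t2 : (A * B₂) * (A * B₁) = ((A * B₁) * (A * B₂))ᵀ := by
      rw [Matrix.transpose_mul, h₂₃, h₁₃]
    rw [t1, t2, t3, h₂₃]
  have hBA : B₁ * A = B₂ * A := by
    have t1 : B₁ * A = (B₁ * A) * (B₂ * A) := by
      conv_lhs => rw [← h₂₁]
      simp only [Matrix.mul_assoc]
    have t3 : (B₂ * A) * (B₁ * A) = B₂ * A := by
      calc (B₂ * A) * (B₁ * A) = B₂ * (A * B₁ * A) := by simp only [Matrix.mul_assoc]
        _ = B₂ * A := by rw [h₁₁]
    have t2 : (B₁ * A) * (B₂ * A) = ((B₂ * A) * (B₁ * A))ᵀ := by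
      rw [Matrix.transpose_mul, h₁₄, h₂₄]
    rw [t1, t2, t3, h₂₄]
  calc B₁ = B₁ * A * B₁ := h₁₂.symm
    _ = B₂ * A * B₁ := by rw [hBA]
    _ = B₂ * A * B₂ := by rw [Matrix.mul_assoc, hAB, ← Matrix.mul_assoc]
    _ = B₂ := h₂₂

lemma mpinv_eq {n : Type} [Fintype n] (A B : Matrix n n ℝ)
    (h₁ : A * B * A = A) (h₂ : B * A * B = B)
    (h₃ : (A * B)ᵀ = A * B) (h₄ : (B * A)ᵀ = B * A) : A.mpinv = B := by
  have hex : ∃ C : Matrix n n ℝ,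
      A * C * A = A ∧ C * A * C = C ∧ (A * C)ᵀ = A * C ∧ (C * A)ᵀ = C * A :=
    ⟨B, h₁, h₂, h₃, h₄⟩
  rw [Matrix.mpinv, dif_pos hex]
  obtain ⟨c₁, c₂, c₃, c₄⟩ := hex.choose_spec
  exact penrose_unique A _ B c₁ c₂ c₃ c₄ h₁ h₂ h₃ h₄

end WMG
namespace WMG

lemma lap_quad (G : WMG) (x : G.V → ℝ) :
    x ⬝ᵥ (G.lap *ᵥ x) = ∑ e : G.E, (G.len e)⁻¹ *
      (x (G.ends e).1 - x (G.ends e).2) ^ 2 := by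
  rw [dot_lap_mulVec]
  exact Finset.sum_congr rfl fun e _ => by ring

lemma lap_quad_nonneg (G : WMG) (x : G.V → ℝ) : 0 ≤ x ⬝ᵥ (G.lap *ᵥ x) := by
  rw [lap_quad]
  refine Finset.sum_nonneg fun e _ => ?_
  have := G.len_pos e
  positivity

lemma adj_symm (G : WMG) {u v : G.V} (h : G.Adj u v) : G.Adj v u := by
  obtain ⟨e, he⟩ := h
  exact ⟨e, he.symm⟩

lemma reach_symm (G : WMG) {u v : G.V} (h : G.Reach u v) : G.Reach v u := by
  induction h with
  | refl => exact Relation.ReflTransGen.refl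
  | tail _ h2 ih =>
      exact Relation.ReflTransGen.trans (Relation.ReflTransGen.single (G.adj_symm h2)) ih

lemma reach_trans (G : WMG) {u v w : G.V} (h : G.Reach u v) (h' : G.Reach v w) :
    G.Reach u w := Relation.ReflTransGen.trans h h'

/-- A function whose "energy" vanishes is constant on a connected graph. -/
lemma const_of_quad_zero (G : WMG) (hG : G.Connected) (x : G.V → ℝ)
    (h : x ⬝ᵥ (G.lap *ᵥ x) = 0) (u v : G.V) : x u = x v := by
  rw [lap_quad] at h
  have hall : ∀ e : G.E, (G.len e)⁻¹ * (x (G.ends e).1 - x (G.ends e).2) ^ 2 = 0 := by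
    rw [Finset.sum_eq_zero_iff_of_nonneg] at h
    · exact fun e => h e (Finset.mem_univ e)
    · intro e _
      have := G.len_pos e
      positivity
  have hadj : ∀ a b : G.V, G.Adj a b → x a = x b := by
    rintro a b ⟨e, he | he⟩
    · have h1 := hall e
      have h2 : (G.len e)⁻¹ ≠ 0 := by
        have := G.len_pos e; positivity
      have h3 : (x (G.ends e).1 - x (G.ends e).2) ^ 2 = 0 := by
        rcases mul_eq_zero.mp h1 with h | h
        · exact absurd h h2
        · exact h
      have := pow_eq_zero_iff (n := 2) (by norm_num) |>.mp h3
      rw [he] at this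
      linarith [this]
    · have h1 := hall e
      have h2 : (G.len e)⁻¹ ≠ 0 := by
        have := G.len_pos e; positivity
      have h3 : (x (G.ends e).1 - x (G.ends e).2) ^ 2 = 0 := by
        rcases mul_eq_zero.mp h1 with h | h
        · exact absurd h h2
        · exact h
      have := pow_eq_zero_iff (n := 2) (by norm_num) |>.mp h3
      rw [he] at this
      linarith [this]
  have hr := hG.2 u v
  induction hr with
  | refl => rfl
  | tail _ h2 ih => exact ih.trans (hadj _ _ h2)

lemma det_lap_add_Jmat_ne_zero (G : WMG) (hG : G.Connected) :
    (G.lap + G.Jmat).det ≠ 0 := by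
  intro h0
  obtain ⟨v, hvne, hveq⟩ := Matrix.exists_mulVec_eq_zero_iff.mpr h0
  have hq : v ⬝ᵥ ((G.lap + G.Jmat) *ᵥ v) = 0 := by rw [hveq]; simp
  rw [Matrix.add_mulVec, dotProduct_add] at hq
  have hJq : v ⬝ᵥ (G.Jmat *ᵥ v) = (Fintype.card G.V : ℝ)⁻¹ * (∑ u, v u) ^ 2 := by
    rw [dotProduct]
    simp_rw [Jmat_mulVec]
    rw [← Finset.sum_mul]
    ring
  have hJnn : 0 ≤ v ⬝ᵥ (G.Jmat *ᵥ v) := by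
    rw [hJq]
    have := G.card_pos hG
    positivity
  have hLnn := G.lap_quad_nonneg v
  have hL0 : v ⬝ᵥ (G.lap *ᵥ v) = 0 := by linarith
  have hJ0 : v ⬝ᵥ (G.Jmat *ᵥ v) = 0 := by linarith
  -- v is constant
  obtain ⟨u0⟩ := hG.1
  have hconst : ∀ u, v u = v u0 := fun u => G.const_of_quad_zero hG v hL0 u u0
  have hsum : ∑ u, v u = (Fintype.card G.V : ℝ) * v u0 := by
    rw [Finset.sum_congr rfl fun u _ => hconst u]
    simp [Finset.sum_const, Finset.card_univ, mul_comm]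
  have hn := G.card_pos hG
  have hu0 : v u0 = 0 := by
    rw [hJq, hsum] at hJ0
    have hninv : 0 < (Fintype.card G.V : ℝ)⁻¹ := by positivity
    have ht2 : ((Fintype.card G.V : ℝ) * v u0) ^ 2 = 0 := by
      nlinarith [sq_nonneg ((Fintype.card G.V : ℝ) * v u0)]
    have ht : (Fintype.card G.V : ℝ) * v u0 = 0 := by
      have := pow_eq_zero_iff (n := 2) (by norm_num) |>.mp ht2
      exact this
    rcases mul_eq_zero.mp ht with h | h
    · exact absurd h (by positivity)
    · exact h
  exact hvne (funext fun u => by rw [hconst u, hu0]; rfl)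

/-- The key properties of the pseudoinverse of the Laplacian of a connected graph. -/
lemma mpinv_lap_spec (G : WMG) (hG : G.Connected) :
    G.lap * G.lap.mpinv = 1 - G.Jmat ∧ G.lap.mpinv * G.lap = 1 - G.Jmat ∧
      (G.lap.mpinv)ᵀ = G.lap.mpinv ∧ G.Jmat * G.lap.mpinv = 0 := by
  set L := G.lap with hL
  set J := G.Jmat with hJdef
  set M := L + J with hM
  have hdet : IsUnit M.det := isUnit_iff_ne_zero.mpr (G.det_lap_add_Jmat_ne_zero hG)
  have hMM : M * M⁻¹ = 1 := Matrix.mul_nonsing_inv _ hdet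
  have hM'M : M⁻¹ * M = 1 := Matrix.nonsing_inv_mul _ hdet
  have hJM : J * M = J := by
    rw [hM, Matrix.mul_add, Jmat_mul_lap, Jmat_mul_Jmat G hG, zero_add]
  have hMJ : M * J = J := by
    rw [hM, Matrix.add_mul, lap_mul_Jmat, Jmat_mul_Jmat G hG, zero_add]
  have hJMinv : J * M⁻¹ = J := by
    calc J * M⁻¹ = (J * M) * M⁻¹ := by rw [hJM]
      _ = J * (M * M⁻¹) := by rw [Matrix.mul_assoc]
      _ = J := by rw [hMM, Matrix.mul_one]
  have hMinvJ : M⁻¹ * J = J := by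
    calc M⁻¹ * J = M⁻¹ * (M * J) := by rw [hMJ]
      _ = (M⁻¹ * M) * J := by rw [Matrix.mul_assoc]
      _ = J := by rw [hM'M, Matrix.one_mul]
  set B := M⁻¹ - J with hB
  have hLB : L * B = 1 - J := by
    rw [hB, Matrix.mul_sub, lap_mul_Jmat]
    have : L * M⁻¹ = (M - J) * M⁻¹ := by rw [hM]; congr 1; abel
    rw [this, Matrix.sub_mul, hMM, hJMinv]
    abel
  have hBL : B * L = 1 - J := by
    rw [hB, Matrix.sub_mul, Jmat_mul_lap]
    have : M⁻¹ * L = M⁻¹ * (M - J) := by rw [hM]; congr 1; abel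
    rw [this, Matrix.mul_sub, hM'M, hMinvJ]
    abel
  have hJB : J * B = 0 := by
    rw [hB, Matrix.mul_sub, hJMinv, Jmat_mul_Jmat G hG, sub_self]
  have hBJ : B * J = 0 := by
    rw [hB, Matrix.sub_mul, hMinvJ, Jmat_mul_Jmat G hG, sub_self]
  have hMt : Mᵀ = M := by rw [hM, Matrix.transpose_add, lap_transpose, Jmat_transpose]
  have hBt : Bᵀ = B := by
    rw [hB, Matrix.transpose_sub, Jmat_transpose, Matrix.transpose_nonsing_inv, hMt]
  have h1mJt : (1 - J)ᵀ = 1 - J := by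
    rw [Matrix.transpose_sub, Matrix.transpose_one, Jmat_transpose]
  have p1 : L * B * L = L := by
    rw [hLB, Matrix.sub_mul, Matrix.one_mul, Jmat_mul_lap, sub_zero]
  have p2 : B * L * B = B := by
    rw [hBL, Matrix.sub_mul, Matrix.one_mul, hJB, sub_zero]
  have p3 : (L * B)ᵀ = L * B := by rw [hLB, h1mJt]
  have p4 : (B * L)ᵀ = B * L := by rw [hBL, h1mJt]
  have hmp : L.mpinv = B := mpinv_eq L B p1 p2 p3 p4
  rw [hmp]
  exact ⟨hLB, hBL, hBt, hJB⟩

end WMG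
attribute [reducible] WMG.delete
namespace WMG

/-- The source/sink vector `δ_s - δ_t`. -/
noncomputable def dvec (G : WMG) (s t : G.V) : G.V → ℝ := fun v => ind v s - ind v t

/-- The potential vector for a unit current from `s` to `t`. -/
noncomputable def xvec (G : WMG) (s t : G.V) : G.V → ℝ := G.lap.mpinv *ᵥ G.dvec s t

lemma sum_mul_ind {α : Type} [Fintype α] (x : α → ℝ) (p : α) :
    ∑ u, x u * ind u p = x p := by
  simp [ind, mul_ite, Finset.sum_ite_eq']

lemma mulVec_dvec (G : WMG) (A : Matrix G.V G.V ℝ) (s t v : G.V) :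
    (A *ᵥ G.dvec s t) v = A v s - A v t := by
  simp only [Matrix.mulVec, dotProduct, dvec, mul_sub]
  rw [Finset.sum_sub_distrib, sum_mul_ind, sum_mul_ind]

lemma sum_dvec (G : WMG) (s t : G.V) : ∑ v, G.dvec s t v = 0 := by
  simp [dvec, Finset.sum_sub_distrib, sum_ind]

lemma xvec_apply (G : WMG) (s t v : G.V) :
    G.xvec s t v = G.lap.mpinv v s - G.lap.mpinv v t := G.mulVec_dvec _ s t v

lemma Jmat_mulVec_dvec (G : WMG) (s t : G.V) : G.Jmat *ᵥ G.dvec s t = 0 := by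
  funext v
  rw [Jmat_mulVec, sum_dvec]
  simp

lemma lap_mulVec_xvec (G : WMG) (hG : G.Connected) (s t : G.V) :
    G.lap *ᵥ G.xvec s t = G.dvec s t := by
  obtain ⟨h1, _, _, _⟩ := G.mpinv_lap_spec hG
  rw [xvec, Matrix.mulVec_mulVec, h1, Matrix.sub_mulVec, Matrix.one_mulVec,
    Jmat_mulVec_dvec, sub_zero]

lemma mpinv_symm_apply (G : WMG) (hG : G.Connected) (u v : G.V) :
    G.lap.mpinv u v = G.lap.mpinv v u := by
  obtain ⟨_, _, h3, _⟩ := G.mpinv_lap_spec hG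
  conv_lhs => rw [← h3]
  rfl

lemma res_eq_xvec (G : WMG) (hG : G.Connected) (s t : G.V) :
    G.res s t = G.xvec s t s - G.xvec s t t := by
  rw [res, xvec_apply, xvec_apply, G.mpinv_symm_apply hG t s]
  ring

lemma res_eq_sum (G : WMG) (hG : G.Connected) (s t : G.V) :
    G.res s t = ∑ e : G.E, (G.len e)⁻¹ *
      (G.xvec s t (G.ends e).1 - G.xvec s t (G.ends e).2) ^ 2 := by
  rw [G.res_eq_xvec hG s t, ← lap_quad]
  have h1 : G.xvec s t s - G.xvec s t t = G.dvec s t ⬝ᵥ G.xvec s t := by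
    rw [dotProduct]
    exact (sum_sub_ind_mul _ s t).symm
  rw [h1, ← G.lap_mulVec_xvec hG s t, dotProduct_comm]

/-- Summing the net current over a set of vertices crossed only by the edge `e`. -/
lemma cut_eval (G : WMG) (e : G.E) (x : G.V → ℝ) (C : Finset G.V)
    (hC : ∀ f : G.E, f ≠ e → ((G.ends f).1 ∈ C ↔ (G.ends f).2 ∈ C)) :
    ∑ v ∈ C, (G.lap *ᵥ x) v = (G.len e)⁻¹ *
      (((if (G.ends e).1 ∈ C then (1:ℝ) else 0) - (if (G.ends e).2 ∈ C then (1:ℝ) else 0)) *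
       (x (G.ends e).1 - x (G.ends e).2)) := by
  rw [sum_lap_mulVec_s7]
  refine Fintype.sum_eq_single e fun f hf => ?_
  by_cases h1 : (G.ends f).1 ∈ C
  · have h2 : (G.ends f).2 ∈ C := (hC f hf).mp h1
    simp [h1, h2]
  · have h2 : (G.ends f).2 ∉ C := fun h => h1 ((hC f hf).mpr h)
    simp [h1, h2]

lemma sum_dvec_mem (G : WMG) (s t : G.V) (C : Finset G.V) :
    ∑ v ∈ C, G.dvec s t v =
      (if s ∈ C then (1:ℝ) else 0) - (if t ∈ C then (1:ℝ) else 0) := by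
  simp only [dvec]
  rw [Finset.sum_sub_distrib]
  congr 1 <;> simp [ind, Finset.sum_ite_eq']

lemma delete_adj (G : WMG) (e f : G.E) (hf : f ≠ e) :
    (G.delete e).Adj (G.ends f).1 (G.ends f).2 :=
  ⟨⟨f, hf⟩, Or.inl rfl⟩

/-- The reachability class of `b` in `G - e` is crossed only by `e`. -/
lemma reach_class_closed (G : WMG) (e : G.E) (b : G.V) (f : G.E) (hf : f ≠ e) :
    ((G.ends f).1 ∈ Finset.univ.filter (fun v => (G.delete e).Reach b v) ↔
     (G.ends f).2 ∈ Finset.univ.filter (fun v => (G.delete e).Reach b v)) := by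
  simp only [Finset.mem_filter, Finset.mem_univ, true_and]
  constructor
  · intro h
    exact Relation.ReflTransGen.tail h (G.delete_adj e f hf)
  · intro h
    exact Relation.ReflTransGen.tail h ((G.delete e).adj_symm (G.delete_adj e f hf))

lemma bridge_of_sep (G : WMG) {e : G.E} {s t : G.V} (hsep : ¬ (G.delete e).Reach s t) :
    G.IsBridge e := fun hc => hsep (hc.2 s t)

lemma reach_delete_of_reach (G : WMG) (e : G.E)
    (hpq : (G.delete e).Reach (G.ends e).1 (G.ends e).2) {u v : G.V} (h : G.Reach u v) :
    (G.delete e).Reach u v := by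
  induction h with
  | refl => exact Relation.ReflTransGen.refl
  | tail _ h2 ih =>
      rename_i b c _
      obtain ⟨f, hor⟩ := h2
      by_cases hf : f = e
      · subst hf
        rcases hor with hor | hor
        · have hb : (G.ends f).1 = b := by rw [hor]
          have hc : (G.ends f).2 = c := by rw [hor]
          rw [hb, hc] at hpq
          exact Relation.ReflTransGen.trans ih hpq
        · have hb : (G.ends f).2 = b := by rw [hor]
          have hc : (G.ends f).1 = c := by rw [hor]
          rw [hb, hc] at hpq
          exact Relation.ReflTransGen.trans ih ((G.delete f).reach_symm hpq)
      · rcases hor with hor | hor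
        · have hb : (G.ends f).1 = b := by rw [hor]
          have hc : (G.ends f).2 = c := by rw [hor]
          refine Relation.ReflTransGen.tail ih ?_
          rw [← hb, ← hc]
          exact G.delete_adj e f hf
        · have hb : (G.ends f).2 = b := by rw [hor]
          have hc : (G.ends f).1 = c := by rw [hor]
          refine Relation.ReflTransGen.tail ih ?_
          rw [← hb, ← hc]
          exact (G.delete e).adj_symm (G.delete_adj e f hf)

lemma not_bridge_of_reach_ends (G : WMG) (hG : G.Connected) (e : G.E)
    (hpq : (G.delete e).Reach (G.ends e).1 (G.ends e).2) : ¬ G.IsBridge e := by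
  rw [IsBridge, not_not]
  exact ⟨hG.1, fun u v => G.reach_delete_of_reach e hpq (hG.2 u v)⟩

end WMG
namespace WMG

lemma sep_term (G : WMG) (s t : G.V) (e : G.E) (x : G.V → ℝ)
    (hx : G.lap *ᵥ x = G.dvec s t) (hsep : ¬ (G.delete e).Reach s t) :
    (G.len e)⁻¹ * (x (G.ends e).1 - x (G.ends e).2) ^ 2 = G.len e := by
  set C : Finset G.V := Finset.univ.filter (fun v => (G.delete e).Reach s v) with hCdef
  have hcut := G.cut_eval e x C (fun f hf => G.reach_class_closed e s f hf)
  have hsum : ∑ v ∈ C, (G.lap *ᵥ x) v = 1 := by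
    rw [hx, sum_dvec_mem]
    have hs : s ∈ C := by
      simp only [hCdef, Finset.mem_filter, Finset.mem_univ, true_and]
      exact Relation.ReflTransGen.refl
    have ht : t ∉ C := by
      simp only [hCdef, Finset.mem_filter, Finset.mem_univ, true_and]
      exact hsep
    rw [if_pos hs, if_neg ht]; ring
  rw [hsum] at hcut
  have hL := G.len_pos e
  by_cases hp : (G.ends e).1 ∈ C <;> by_cases hq : (G.ends e).2 ∈ C
  · rw [if_pos hp, if_pos hq] at hcut
    norm_num at hcut
  · rw [if_pos hp, if_neg hq] at hcut
    have ha : x (G.ends e).1 - x (G.ends e).2 = G.len e := by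
      field_simp at hcut
      linarith
    rw [ha]
    field_simp
  · rw [if_neg hp, if_pos hq] at hcut
    have ha : x (G.ends e).1 - x (G.ends e).2 = -G.len e := by
      field_simp at hcut
      linarith
    rw [ha]
    field_simp
  · rw [if_neg hp, if_neg hq] at hcut
    norm_num at hcut

lemma bridge_eq (G : WMG) (hG : G.Connected) (s t : G.V) (e : G.E) (hb : G.IsBridge e)
    (hre : (G.delete e).Reach s t) (x : G.V → ℝ) (hx : G.lap *ᵥ x = G.dvec s t) :
    x (G.ends e).1 = x (G.ends e).2 := by
  set C : Finset G.V := Finset.univ.filter (fun v => (G.delete e).Reach (G.ends e).1 v) with hCdef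
  have hmem : ∀ v : G.V, v ∈ C ↔ (G.delete e).Reach (G.ends e).1 v := by
    intro v
    simp only [hCdef, Finset.mem_filter, Finset.mem_univ, true_and]
  have hcut := G.cut_eval e x C (fun f hf => G.reach_class_closed e (G.ends e).1 f hf)
  have hsum : ∑ v ∈ C, (G.lap *ᵥ x) v = 0 := by
    rw [hx, sum_dvec_mem]
    by_cases hs : s ∈ C
    · have ht : t ∈ C := by
        rw [hmem] at hs ⊢
        exact Relation.ReflTransGen.trans hs hre
      rw [if_pos hs, if_pos ht]; ring
    · have ht : t ∉ C := by
        intro ht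
        apply hs
        rw [hmem] at ht ⊢
        exact Relation.ReflTransGen.trans ht ((G.delete e).reach_symm hre)
      rw [if_neg hs, if_neg ht]; ring
  rw [hsum] at hcut
  have hp : (G.ends e).1 ∈ C := by
    rw [hmem]; exact Relation.ReflTransGen.refl
  have hq : (G.ends e).2 ∉ C := by
    intro hq
    rw [hmem] at hq
    exact (G.not_bridge_of_reach_ends hG e hq) hb
  rw [if_pos hp, if_neg hq] at hcut
  have hL := G.len_pos e
  have : (G.len e)⁻¹ ≠ 0 := by positivity
  field_simp at hcut
  linarith

end WMG
namespace WMG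

lemma sum_subtype_add {α : Type} [Fintype α] {e : α} [Fintype {x : α // x ≠ e}] (T : α → ℝ) :
    (∑ f : {x : α // x ≠ e}, T f.1) + T e = ∑ f : α, T f := by
  classical
  rw [← Finset.sum_subtype (Finset.univ.erase e)
    (fun x => by simp [Finset.mem_erase]) T]
  exact Finset.sum_erase_add _ _ (Finset.mem_univ e)

lemma lap_delete (G : WMG) (e : G.E) :
    (G.delete e).lap = G.lap - (G.len e)⁻¹ • Matrix.of (fun u v : G.V =>
      (ind u (G.ends e).1 - ind u (G.ends e).2) *
      (ind v (G.ends e).1 - ind v (G.ends e).2)) := by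
  ext u v
  show (G.delete e).lap u v = G.lap u v - (G.len e)⁻¹ * ((ind u (G.ends e).1 - ind u (G.ends e).2) *
    (ind v (G.ends e).1 - ind v (G.ends e).2))
  have h2 : (G.delete e).lap u v
      = ∑ f ∈ @Finset.univ (G.delete e).E (G.delete e).instE, (G.len f.1)⁻¹ *
        ((ind u (G.ends f.1).1 - ind u (G.ends f.1).2) *
         (ind v (G.ends f.1).1 - ind v (G.ends f.1).2)) := lap_apply (G.delete e) u v
  rw [h2, lap_apply]
  have h3 := @sum_subtype_add G.E G.instE e (G.delete e).instE (fun f : G.E => (G.len f)⁻¹ *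
    ((ind u (G.ends f).1 - ind u (G.ends f).2) *
     (ind v (G.ends f).1 - ind v (G.ends f).2)))
  rw [← h3, add_sub_cancel_right]

lemma rank1_mulVec (G : WMG) (p q : G.V) (x : G.V → ℝ) (v : G.V) :
    (Matrix.of (fun u w : G.V =>
      (ind u p - ind u q) * (ind w p - ind w q)) *ᵥ x) v
      = (ind v p - ind v q) * (x p - x q) := by
  rw [Matrix.mulVec, dotProduct]
  calc ∑ u : G.V, Matrix.of (fun u w : G.V =>
        (ind u p - ind u q) * (ind w p - ind w q)) v u * x u
      = ∑ u : G.V, (ind v p - ind v q) * ((ind u p - ind u q) * x u) :=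
        Finset.sum_congr rfl fun u _ => by simp only [Matrix.of_apply]; ring
    _ = (ind v p - ind v q) * ∑ u : G.V, (ind u p - ind u q) * x u := by
        rw [Finset.mul_sum]
    _ = _ := by rw [sum_sub_ind_mul]

lemma scalar_key (L R d dy z : ℝ) (hz : z * L = 1) (h : d = dy - z * d * R) :
    d * (L + R) = L * dy := by
  linear_combination L * h - (d * R) * hz

/-- Sherman–Morrison relation between the currents in `G` and in `G - e`. -/
lemma nonbridge_key (G : WMG) (hG : G.Connected) (s t : G.V) (e : G.E)
    (hnb : ¬ G.IsBridge e) :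
    (G.xvec s t (G.ends e).1 - G.xvec s t (G.ends e).2) *
        (G.len e + (G.delete e).res (G.ends e).1 (G.ends e).2)
      = G.len e *
        ((G.delete e).xvec s t (G.ends e).1 - (G.delete e).xvec s t (G.ends e).2)
    ∧ 0 ≤ (G.delete e).res (G.ends e).1 (G.ends e).2 := by
  set H := G.delete e with hHdef
  have hH : H.Connected := not_not.mp hnb
  obtain ⟨hLB, hBL, hBt, hJB⟩ := H.mpinv_lap_spec hH
  set p := (G.ends e).1
  set q := (G.ends e).2
  set x := G.xvec s t with hxdef
  set y := H.xvec s t with hydef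
  set B := H.lap.mpinv with hBdef
  set b : G.V → ℝ := H.dvec p q with hbdef
  have hbv : ∀ v : G.V, b v = ind v p - ind v q := fun v => rfl
  have hL := G.len_pos e
  have hsym : B q p = B p q := H.mpinv_symm_apply hH q p
  have hwp : (B *ᵥ b) p = B p p - B p q := H.mulVec_dvec B p q p
  have hwq : (B *ᵥ b) q = B q p - B q q := H.mulVec_dvec B p q q
  have hres2 : H.res p q = B p p - 2 * B p q + B q q := rfl
  -- resistance nonnegative
  have hR : 0 ≤ H.res p q := by
    have hBLB : B * H.lap * B = B := by
      rw [hBL, Matrix.sub_mul, Matrix.one_mul, hJB, sub_zero]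
    have h1 : H.res p q = b ⬝ᵥ (B *ᵥ b) := by
      rw [hres2, dotProduct]
      have : ∀ v : G.V, b v * (B *ᵥ b) v = (ind v p - ind v q) * (B *ᵥ b) v :=
        fun v => by rw [hbv]
      rw [Finset.sum_congr rfl fun v _ => this v, sum_sub_ind_mul, hwp, hwq]
      linarith [hsym]
    have h2 : b ⬝ᵥ (B *ᵥ b) = (B *ᵥ b) ⬝ᵥ (H.lap *ᵥ (B *ᵥ b)) := by
      have hw2 : B *ᵥ b = B *ᵥ (H.lap *ᵥ (B *ᵥ b)) := by
        rw [Matrix.mulVec_mulVec, Matrix.mulVec_mulVec, hBLB]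
      conv_lhs => rw [show (B *ᵥ b : G.V → ℝ) = B *ᵥ (H.lap *ᵥ (B *ᵥ b)) from hw2]
      rw [Matrix.dotProduct_mulVec]
      congr 1
      conv_lhs => rw [← hBt]
      rw [Matrix.vecMul_transpose]
    rw [h1, h2]
    exact H.lap_quad_nonneg (B *ᵥ b)
  refine ⟨?_, hR⟩
  -- the current equation
  have hx1 : G.lap *ᵥ x = G.dvec s t := G.lap_mulVec_xvec hG s t
  have hx2 : H.lap *ᵥ x = G.dvec s t - ((G.len e)⁻¹ * (x p - x q)) • b := by
    rw [G.lap_delete e, Matrix.sub_mulVec, hx1]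
    congr 1
    funext v
    rw [Matrix.smul_mulVec, Pi.smul_apply, G.rank1_mulVec p q x v]
    simp only [Pi.smul_apply, smul_eq_mul, hbv]
    ring
  have hy1 : B *ᵥ G.dvec s t = y := rfl
  have hmain := congrArg (fun z => B *ᵥ z) hx2
  rw [Matrix.mulVec_mulVec, hBL, Matrix.mulVec_sub, Matrix.mulVec_smul, hy1] at hmain
  have hmp := congrFun hmain p
  have hmq := congrFun hmain q
  rw [Matrix.sub_mulVec, Matrix.one_mulVec] at hmp hmq
  simp only [Pi.sub_apply, Pi.smul_apply, smul_eq_mul] at hmp hmq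
  rw [hwp] at hmp
  rw [hwq] at hmq
  have hJconst : (H.Jmat *ᵥ x) p = (H.Jmat *ᵥ x) q := by
    rw [Jmat_mulVec, Jmat_mulVec]
  have hkey : (x p - x q) = (y p - y q) - (G.len e)⁻¹ * (x p - x q) * H.res p q := by
    rw [hres2]
    linear_combination hmp - hmq + hJconst + ((G.len e)⁻¹ * (x p - x q)) * hsym
  have hz : (G.len e)⁻¹ * G.len e = 1 := by
    field_simp
  exact scalar_key (G.len e) (H.res p q) (x p - x q) (y p - y q) (G.len e)⁻¹ hz hkey

lemma volt_diff (G : WMG) (p q s t : G.V) :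
    G.volt p q s - G.volt p q t = G.xvec s t q - G.xvec s t p := by
  rw [volt, volt, xvec_apply, xvec_apply]
  ring

end WMG
namespace WMG

lemma scalar_final (L R dx dy : ℝ) (hL : 0 < L) (hR : 0 ≤ R)
    (h : dx * (L + R) = L * dy) :
    L⁻¹ * dx ^ 2 = (L / (L + R) ^ 2) * dy ^ 2 := by
  have hLR : 0 < L + R := by linarith
  rw [inv_mul_eq_div, div_mul_eq_mul_div, div_eq_div_iff (ne_of_gt hL) (by positivity)]
  linear_combination (dx * (L + R) + L * dy) * h

end WMG

/-- **Euler's Formula for the Resistance Function I.**  For vertices `s, t` of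
a finite connected weighted graph `G`, with `B` the set of edges whose removal
disconnects `s` from `t`:
`r(s,t) = ∑_{e ∈ B} L_e
        + ∑_{e not a bridge} (L_e/(L_e+R_e)²) (j^{G-e}_{p_e}(q_e,s) - j^{G-e}_{p_e}(q_e,t))²
        = ∑_{e ∈ B} L_e
        + ∑_{e not a bridge} (1/L_e) (j_{p_e}(q_e,s) - j_{p_e}(q_e,t))²`. -/
theorem euler_formula_resistance_I (G : WMG) (hG : G.Connected) (s t : G.V) :
    (G.res s t =
      (∑ e ∈ Finset.univ.filter (fun e : G.E => ¬ (G.delete e).Reach s t), G.len e) +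
      ∑ e ∈ Finset.univ.filter (fun e : G.E => ¬ G.IsBridge e),
        (G.len e / (G.len e + (G.delete e).res (G.ends e).1 (G.ends e).2) ^ 2) *
          ((G.delete e).volt (G.ends e).1 (G.ends e).2 s -
           (G.delete e).volt (G.ends e).1 (G.ends e).2 t) ^ 2) ∧
    (G.res s t =
      (∑ e ∈ Finset.univ.filter (fun e : G.E => ¬ (G.delete e).Reach s t), G.len e) +
      ∑ e ∈ Finset.univ.filter (fun e : G.E => ¬ G.IsBridge e),
        (1 / G.len e) *
          (G.volt (G.ends e).1 (G.ends e).2 s -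
           G.volt (G.ends e).1 (G.ends e).2 t) ^ 2) := by
  have hx1 : G.lap *ᵥ G.xvec s t = G.dvec s t := G.lap_mulVec_xvec hG s t
  have hres := G.res_eq_sum hG s t
  have hsum : ∑ e : G.E,
        (G.len e)⁻¹ * (G.xvec s t (G.ends e).1 - G.xvec s t (G.ends e).2) ^ 2
      = (∑ e ∈ Finset.univ.filter (fun e : G.E => ¬ (G.delete e).Reach s t), G.len e) +
        ∑ e ∈ Finset.univ.filter (fun e : G.E => ¬ G.IsBridge e),
          (G.len e)⁻¹ * (G.xvec s t (G.ends e).1 - G.xvec s t (G.ends e).2) ^ 2 := by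
    rw [← Finset.sum_filter_add_sum_filter_not Finset.univ
      (fun e : G.E => ¬ (G.delete e).Reach s t)
      (fun e => (G.len e)⁻¹ * (G.xvec s t (G.ends e).1 - G.xvec s t (G.ends e).2) ^ 2)]
    congr 1
    · exact Finset.sum_congr rfl fun e he =>
        G.sep_term s t e _ hx1 (Finset.mem_filter.mp he).2
    · rw [← Finset.sum_filter_add_sum_filter_not
        (Finset.univ.filter (fun e : G.E => ¬ ¬ (G.delete e).Reach s t))
        (fun e : G.E => G.IsBridge e)
        (fun e => (G.len e)⁻¹ * (G.xvec s t (G.ends e).1 - G.xvec s t (G.ends e).2) ^ 2)]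
      have hzero : ∑ e ∈ (Finset.univ.filter
            (fun e : G.E => ¬ ¬ (G.delete e).Reach s t)).filter
            (fun e : G.E => G.IsBridge e),
          (G.len e)⁻¹ * (G.xvec s t (G.ends e).1 - G.xvec s t (G.ends e).2) ^ 2 = 0 := by
        refine Finset.sum_eq_zero fun e he => ?_
        have h1 := Finset.mem_filter.mp he
        have h2 := Finset.mem_filter.mp h1.1
        have hre : (G.delete e).Reach s t := not_not.mp h2.2
        have heq := G.bridge_eq hG s t e h1.2 hre _ hx1
        rw [heq, sub_self]
        ring
      rw [hzero, zero_add]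
      congr 1
      rw [Finset.filter_filter]
      refine Finset.filter_congr fun e _ => ?_
      constructor
      · exact fun h => h.2
      · intro hnb
        exact ⟨not_not_intro ((not_not.mp hnb).2 s t), hnb⟩
  constructor
  · rw [hres, hsum]
    congr 1
    refine Finset.sum_congr rfl fun e he => ?_
    have hnb : ¬ G.IsBridge e := (Finset.mem_filter.mp he).2
    obtain ⟨hkey, hR⟩ := G.nonbridge_key hG s t e hnb
    have hv : (G.delete e).volt (G.ends e).1 (G.ends e).2 s -
        (G.delete e).volt (G.ends e).1 (G.ends e).2 t
        = (G.delete e).xvec s t (G.ends e).2 - (G.delete e).xvec s t (G.ends e).1 :=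
      (G.delete e).volt_diff (G.ends e).1 (G.ends e).2 s t
    rw [hv]
    have hsq : ((G.delete e).xvec s t (G.ends e).2 - (G.delete e).xvec s t (G.ends e).1) ^ 2
        = ((G.delete e).xvec s t (G.ends e).1 - (G.delete e).xvec s t (G.ends e).2) ^ 2 := by
      ring
    rw [hsq]
    exact WMG.scalar_final (G.len e) ((G.delete e).res (G.ends e).1 (G.ends e).2)
      (G.xvec s t (G.ends e).1 - G.xvec s t (G.ends e).2)
      ((G.delete e).xvec s t (G.ends e).1 - (G.delete e).xvec s t (G.ends e).2)
      (G.len_pos e) hR hkey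
  · rw [hres, hsum]
    congr 1
    refine Finset.sum_congr rfl fun e he => ?_
    rw [G.volt_diff (G.ends e).1 (G.ends e).2 s t, one_div]
    ring
end
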